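/- Let M• be a bounded complex of free modules over a regular local ring Λ with residue field k, concentrated in degrees [0, ν], such that H^j(M• ⊗^L_Λ k) = 0 for all j ≠ d (where 0 ≤ d ≤ ν). Then H^j(M•) = 0 for j ≠ d, H^d(M•) is a finite free Λ-module, and for every ideal I generated by a regular sequence, H^d(M• ⊗^L_Λ Λ/I) = H^d(M•) ⊗_Λ Λ/I with all other cohomology of M• ⊗^L_Λ Λ/I vanishing. -/

import Mathlib

open CategoryTheory MonoidalCategory TensorProduct

/-!
STATEMENT 19: Let `Λ` be a regular local ring (Noetherian local, with maximal ideal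
generated by a regular sequence) with residue field `k`, and `M•` a bounded complex of
finite free `Λ`-modules concentrated in degrees `[0, ν]`.  Since the terms are free, the
derived fibre `M• ⊗^L_Λ k` is computed by the termwise tensor product.  If
`H^j(M• ⊗^L_Λ k) = 0` for all `j ≠ d` (with `0 ≤ d ≤ ν`), then `H^j(M•) = 0` for
`j ≠ d`, `H^d(M•)` is a finite free `Λ`-module, and for every ideal `I` generated by a
regular sequence, `H^j(M• ⊗^L_Λ Λ/I) = 0` for `j ≠ d` while
`H^d(M• ⊗^L_Λ Λ/I) ≅ H^d(M•) ⊗_Λ Λ/I`.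
-/


set_option linter.unusedSectionVars false
set_option linter.unnecessarySimpa false
set_option maxHeartbeats 1600000

/-! Auxiliary material for `stmt19`. -/

namespace Stmt19

section Abs
variable {Λ : Type} [CommRing Λ]
variable {A B C : Type} [AddCommGroup A] [AddCommGroup B] [AddCommGroup C]
  [Module Λ A] [Module Λ B] [Module Λ C]

lemma exact_of_homotopy (a : A →ₗ[Λ] B) (b : B →ₗ[Λ] C) (s : B →ₗ[Λ] A) (t : C →ₗ[Λ] B)
    (h : a ∘ₗ s + t ∘ₗ b = LinearMap.id) (x : B) (hx : b x = 0) : ∃ y, a y = x :=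
  ⟨s x, by have := LinearMap.congr_fun h x; simpa [hx] using this⟩

variable (a : A →ₗ[Λ] B) (b : B →ₗ[Λ] C) (tb : B →ₗ[Λ] A) (hb : C →ₗ[Λ] B)

/-- The idempotent whose range realizes the middle homology. -/
noncomputable def wmap : B →ₗ[Λ] B :=
  (LinearMap.id - a ∘ₗ tb) ∘ₗ (LinearMap.id - hb ∘ₗ b)

variable {a b tb hb}
variable (hba : ∀ x, b (a x) = 0) (hta : ∀ x, a (tb (a x)) = a x) (hhb : ∀ x, b (hb (b x)) = b x)

lemma wmap_apply (x : B) :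
    wmap a b tb hb x = (x - hb (b x)) - a (tb (x - hb (b x))) := by
  simp [wmap, LinearMap.sub_apply]

include hba hhb in
lemma b_wmap (x : B) : b (wmap a b tb hb x) = 0 := by
  rw [wmap_apply, map_sub, map_sub, hba, sub_zero, hhb, sub_self]

include hba hta in
lemma wmap_a (y : A) : wmap a b tb hb (a y) = 0 := by
  rw [wmap_apply, hba, map_zero, sub_zero, hta, sub_self]

lemma wmap_of_ker (x : B) (hx : b x = 0) : wmap a b tb hb x = x - a (tb x) := by
  rw [wmap_apply, hx, map_zero, sub_zero]

include hta in
lemma a_tb_wmap (x : B) : a (tb (wmap a b tb hb x)) = 0 := by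
  rw [wmap_apply]
  set z := x - hb (b x)
  rw [map_sub, map_sub, hta, sub_self]

include hba hta hhb in
lemma wmap_idem (x : B) : wmap a b tb hb (wmap a b tb hb x) = wmap a b tb hb x := by
  rw [wmap_of_ker _ (b_wmap hba hhb x), a_tb_wmap hta _, sub_zero]

include hba hta hhb in
lemma homEquiv (c' : A →ₗ[Λ] LinearMap.ker b) (hc : ∀ x, (c' x : B) = a x) :
    Nonempty ((↥(LinearMap.ker b) ⧸ LinearMap.range c') ≃ₗ[Λ]
      ↥(LinearMap.range (wmap a b tb hb))) := by
  set w := wmap a b tb hb with hw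
  have hbw : ∀ x : B, b (w x) = 0 := b_wmap hba hhb
  set φ : ↥(LinearMap.ker b) →ₗ[Λ] ↥(LinearMap.range w) :=
    LinearMap.codRestrict _ (w ∘ₗ (LinearMap.ker b).subtype)
      (fun x => LinearMap.mem_range_self _ _) with hφ
  have hker : LinearMap.range c' ≤ LinearMap.ker φ := by
    rintro _ ⟨x, rfl⟩
    have : (φ (c' x) : B) = 0 := by
      have : (φ (c' x) : B) = w ((c' x : B)) := rfl
      rw [this, hc, wmap_a hba hta]
    exact Subtype.ext this
  set ψ := Submodule.liftQ _ φ hker with hψ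
  have hinj : Function.Injective ψ := by
    rw [← LinearMap.ker_eq_bot, Submodule.ker_liftQ_eq_bot']
    apply le_antisymm hker
    rintro x hx
    have hx0 : w (x : B) = 0 := congrArg Subtype.val (hx : φ x = 0)
    have h2 : (x : B) = a (tb (x : B)) := by
      have := wmap_of_ker (a := a) (tb := tb) (hb := hb) (x : B) x.2
      rw [hx0] at this
      exact (sub_eq_zero.mp this.symm)
    refine ⟨tb (x : B), Subtype.ext ?_⟩
    rw [hc]; exact h2.symm
  have hsurj : Function.Surjective ψ := by
    rintro ⟨z, y, rfl⟩
    refine ⟨Submodule.Quotient.mk ⟨w y, hbw y⟩, ?_⟩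
    have : ψ (Submodule.Quotient.mk ⟨w y, hbw y⟩) = φ ⟨w y, hbw y⟩ := rfl
    rw [this]
    exact Subtype.ext (wmap_idem hba hta hhb y)
  exact ⟨LinearEquiv.ofBijective ψ ⟨hinj, hsurj⟩⟩

/-- The range of an idempotent commutes with `⊗ N`. -/
lemma range_rTensor_equiv (N : Type) [AddCommGroup N] [Module Λ N]
    (w : B →ₗ[Λ] B) (hw : ∀ x, w (w x) = w x) :
    Nonempty (↥(LinearMap.range (w.rTensor N)) ≃ₗ[Λ] (↥(LinearMap.range w) ⊗[Λ] N)) := by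
  set j := (LinearMap.range w).subtype
  set c : B →ₗ[Λ] ↥(LinearMap.range w) :=
    LinearMap.codRestrict _ w (fun x => LinearMap.mem_range_self _ _) with hcdef
  have h1 : j ∘ₗ c = w := rfl
  have h2 : c ∘ₗ j = LinearMap.id := by
    ext ⟨x, y, rfl⟩
    exact hw y
  have hcomp : (c.rTensor N) ∘ₗ (j.rTensor N) = LinearMap.id := by
    rw [← LinearMap.rTensor_comp, h2, LinearMap.rTensor_id]
  have hinj : Function.Injective (j.rTensor N) :=
    Function.LeftInverse.injective (g := c.rTensor N)
      (fun u => by rw [← LinearMap.comp_apply, hcomp, LinearMap.id_apply])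
  have hcsurj : Function.Surjective c := by
    rintro ⟨x, y, rfl⟩; exact ⟨y, Subtype.ext rfl⟩
  have hwT : LinearMap.rTensor N w = (j.rTensor N) ∘ₗ (c.rTensor N) := by
    rw [← LinearMap.rTensor_comp, h1]
  have hrange : LinearMap.range (w.rTensor N) = LinearMap.range (j.rTensor N) := by
    rw [hwT]
    exact LinearMap.range_comp_of_range_eq_top _
      (LinearMap.range_eq_top.mpr (LinearMap.rTensor_surjective N hcsurj))
  exact ⟨(LinearEquiv.ofEq _ _ hrange).trans (LinearEquiv.ofInjective (j.rTensor N) hinj).symm⟩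

end Abs

section Loc
variable {Λ : Type} [CommRing Λ] [IsLocalRing Λ]
variable {A B : Type} [AddCommGroup A] [AddCommGroup B] [Module Λ A] [Module Λ B]

lemma nak_surj {N : Type} [AddCommGroup N] [Module Λ N] [Module.Finite Λ N]
    (N' : Submodule Λ N)
    (h : ∀ x : N, x ∈ N' ⊔ ((IsLocalRing.maximalIdeal Λ) • ⊤ : Submodule Λ N)) : N' = ⊤ := by
  have : (⊤ : Submodule Λ N) ≤ N' ⊔ (IsLocalRing.maximalIdeal Λ) • ⊤ := fun x _ => h x
  refine le_antisymm le_top (Submodule.le_of_le_smul_of_le_jacobson_bot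
    Module.Finite.fg_top ?_ this)
  rw [IsLocalRing.jacobson_eq_maximalIdeal ⊥ bot_ne_top]

lemma tmul_one_eq_zero_iff (x : A) (I : Ideal Λ) :
    x ⊗ₜ[Λ] (1 : Λ ⧸ I) = 0 ↔ x ∈ (I • ⊤ : Submodule Λ A) := by
  constructor
  · intro hx
    have := congrArg (tensorQuotEquivQuotSMul A I) hx
    rw [map_zero] at this
    have h2 : tensorQuotEquivQuotSMul A I (x ⊗ₜ[Λ] (1 : Λ ⧸ I)) =
        Submodule.Quotient.mk x := by
      have h1 : (1 : Λ ⧸ I) = Ideal.Quotient.mk I 1 := rfl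
      rw [h1, tensorQuotEquivQuotSMul_tmul_mk, one_smul]
    rw [h2] at this
    exact (Submodule.Quotient.mk_eq_zero _).mp this
  · intro hx
    have : x ⊗ₜ[Λ] (1 : Λ ⧸ I) = (tensorQuotEquivQuotSMul A I).symm
        (Submodule.Quotient.mk x) := by rw [tensorQuotEquivQuotSMul_symm_mk]
    rw [this, (Submodule.Quotient.mk_eq_zero _).mpr hx, map_zero]

lemma one_tmul_eq_zero_iff (x : A) (I : Ideal Λ) :
    (1 : Λ ⧸ I) ⊗ₜ[Λ] x = 0 ↔ x ∈ (I • ⊤ : Submodule Λ A) := by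
  constructor
  · intro hx
    have := congrArg (quotTensorEquivQuotSMul A I) hx
    rw [map_zero] at this
    have h2 : quotTensorEquivQuotSMul A I ((1 : Λ ⧸ I) ⊗ₜ[Λ] x) =
        Submodule.Quotient.mk x := by
      have h1 : (1 : Λ ⧸ I) = Ideal.Quotient.mk I 1 := rfl
      rw [h1, quotTensorEquivQuotSMul_mk_tmul, one_smul]
    rw [h2] at this
    exact (Submodule.Quotient.mk_eq_zero _).mp this
  · intro hx
    have : (1 : Λ ⧸ I) ⊗ₜ[Λ] x = (quotTensorEquivQuotSMul A I).symm
        (Submodule.Quotient.mk x) := by rw [quotTensorEquivQuotSMul_symm_mk]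
    rw [this, (Submodule.Quotient.mk_eq_zero _).mpr hx, map_zero]

lemma tmul_one_surjective (I : Ideal Λ) (z : A ⊗[Λ] (Λ ⧸ I)) :
    ∃ x : A, x ⊗ₜ[Λ] (1 : Λ ⧸ I) = z := by
  obtain ⟨x, hx⟩ := Submodule.Quotient.mk_surjective _ (tensorQuotEquivQuotSMul A I z)
  refine ⟨x, ?_⟩
  have : x ⊗ₜ[Λ] (1 : Λ ⧸ I) = (tensorQuotEquivQuotSMul A I).symm
      (Submodule.Quotient.mk x) := by rw [tensorQuotEquivQuotSMul_symm_mk]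
  rw [this, hx, LinearEquiv.symm_apply_apply]

/-- bridge from the `𝔪`-condition to injectivity of `k ⊗ φ` -/
lemma lTensor_injective_of_m_inj (φ : A →ₗ[Λ] B)
    (h : ∀ x : A, φ x ∈ ((IsLocalRing.maximalIdeal Λ) • ⊤ : Submodule Λ B) →
      x ∈ ((IsLocalRing.maximalIdeal Λ) • ⊤ : Submodule Λ A)) :
    Function.Injective (φ.lTensor (IsLocalRing.ResidueField Λ)) := by
  have hsurj : Function.Surjective (algebraMap Λ (IsLocalRing.ResidueField Λ)) :=
    Ideal.Quotient.mk_surjective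
  rw [← LinearMap.ker_eq_bot, eq_bot_iff]
  intro z hz
  obtain ⟨x, rfl⟩ := TensorProduct.mk_surjective Λ A (IsLocalRing.ResidueField Λ) hsurj z
  rw [LinearMap.mem_ker, TensorProduct.mk_apply, LinearMap.lTensor_tmul] at hz
  have hx : φ x ∈ ((IsLocalRing.maximalIdeal Λ) • ⊤ : Submodule Λ B) :=
    (one_tmul_eq_zero_iff (φ x) (IsLocalRing.maximalIdeal Λ)).mp hz
  have : x ∈ ((IsLocalRing.maximalIdeal Λ) • ⊤ : Submodule Λ A) := h x hx
  show (TensorProduct.mk Λ (IsLocalRing.ResidueField Λ) A 1) x ∈ ⊥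
  rw [Submodule.mem_bot, TensorProduct.mk_apply]
  exact (one_tmul_eq_zero_iff x (IsLocalRing.maximalIdeal Λ)).mpr this

lemma split_of_m_inj [Module.Finite Λ A] [Module.Finite Λ B] [Module.Free Λ B]
    (φ : A →ₗ[Λ] B)
    (h : ∀ x : A, φ x ∈ ((IsLocalRing.maximalIdeal Λ) • ⊤ : Submodule Λ B) →
      x ∈ ((IsLocalRing.maximalIdeal Λ) • ⊤ : Submodule Λ A)) :
    ∃ ρ : B →ₗ[Λ] A, ρ ∘ₗ φ = LinearMap.id :=
  (IsLocalRing.split_injective_iff_lTensor_residueField_injective φ).mpr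
    (lTensor_injective_of_m_inj φ h)

end Loc

section Cplx
variable {Λ : Type} [CommRing Λ]

lemma up_prev (j : ℕ) : (ComplexShape.up ℕ).prev j = j - 1 := by
  cases j with
  | zero =>
    refine (ComplexShape.up ℕ).prev_eq_self' 0 (fun i hi => ?_)
    simpa using hi
  | succ n => exact (ComplexShape.up ℕ).prev_eq' (by simp)

lemma up_next (j : ℕ) : (ComplexShape.up ℕ).next j = j + 1 :=
  (ComplexShape.up ℕ).next_eq' (by simp)

variable (K : CochainComplex (ModuleCat.{0} Λ) ℕ)

lemma exactAt_iff_elem (j : ℕ) :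
    K.ExactAt j ↔ ∀ x : K.X j, K.d j (j+1) x = 0 →
      ∃ y : K.X (j-1), K.d (j-1) j y = x := by
  rw [K.exactAt_iff' (j-1) j (j+1) (up_prev j) (up_next j),
    ShortComplex.moduleCat_exact_iff]
  rfl

lemma subsingleton_homology_iff (j : ℕ) :
    Subsingleton (K.homology j) ↔ K.ExactAt j := by
  rw [K.exactAt_iff_isZero_homology]
  constructor
  · intro h
    exact ModuleCat.isZero_of_subsingleton _
  · intro h
    have hid : 𝟙 (K.homology j) = 0 := h.eq_of_src _ _
    constructor
    intro x y
    have hx : x = (𝟙 (K.homology j) : K.homology j ⟶ K.homology j) x := rfl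
    have hy : y = (𝟙 (K.homology j) : K.homology j ⟶ K.homology j) y := rfl
    rw [hx, hy, hid]
    rfl

lemma d_d_elem (i j k : ℕ) (x : K.X i) : K.d j k (K.d i j x) = 0 := by
  exact (by rw [K.d_comp_d] : (K.d i j ≫ K.d j k) x = (0 : K.X i ⟶ K.X k) x)

lemma homology_equiv_range (j : ℕ)
    (tb : K.X j →ₗ[Λ] K.X (j-1)) (hb : K.X (j+1) →ₗ[Λ] K.X j)
    (ht : ∀ x, K.d (j-1) j (tb (K.d (j-1) j x)) = K.d (j-1) j x)
    (hh : ∀ x, K.d j (j+1) (hb (K.d j (j+1) x)) = K.d j (j+1) x) :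
    Nonempty ((K.homology j) ≃ₗ[Λ]
      ↥(LinearMap.range (wmap (K.d (j-1) j).hom
        (K.d j (j+1)).hom tb hb))) := by
  have iso1 : K.homology j ≅ (K.sc' (j-1) j (j+1)).homology :=
    K.homologyIsoSc' (j-1) j (j+1) (up_prev j) (up_next j)
  set S := K.sc' (j-1) j (j+1) with hS
  have iso2 : S.homology ≅ S.moduleCatLeftHomologyData.H := S.moduleCatHomologyIso
  have E1 := (iso1 ≪≫ iso2).toLinearEquiv
  obtain ⟨E2⟩ := homEquiv (a := (K.d (j-1) j).hom)
    (b := (K.d j (j+1)).hom) (tb := tb) (hb := hb)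
    (fun x => d_d_elem K (j-1) j (j+1) x) ht hh
    (S.moduleCatToCycles) (fun x => rfl)
  exact ⟨E1.trans E2⟩

end Cplx

section Ind
variable {Λ : Type} [CommRing Λ] [IsNoetherianRing Λ] [IsLocalRing Λ]

variable (M : CochainComplex (ModuleCat.{0} Λ) ℕ) (ν d : ℕ)

variable (hfree : ∀ i, Module.Free Λ (M.X i)) (hfin : ∀ i, Module.Finite Λ (M.X i))
  (hbound : ∀ i, ν < i → Subsingleton (M.X i))
  (hm : ∀ j, j ≠ d → ∀ x : M.X j,
    M.d j (j+1) x ∈ ((IsLocalRing.maximalIdeal Λ) • ⊤ : Submodule Λ (M.X (j+1))) →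
    ∃ y : M.X (j-1), x - M.d (j-1) j y ∈
      ((IsLocalRing.maximalIdeal Λ) • ⊤ : Submodule Λ (M.X j)))

include hfree hfin hbound hm in
lemma desc : ∀ t n, ν ≤ n + t → d ≤ n →
    ∃ H : M.X (n+1) →ₗ[Λ] M.X n, ∀ x : M.X (n+1),
      M.d (n+1) (n+2) x = 0 → M.d n (n+1) (H x) = x := by
  intro t
  induction t with
  | zero =>
    intro n hn _
    haveI := hbound (n+1) (by omega)
    refine ⟨0, fun x hx => ?_⟩
    have hx0 : x = 0 := Subsingleton.elim x 0
    simp [hx0]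
  | succ t IH =>
    intro n hn hdn
    by_cases hcase : ν ≤ n
    · haveI := hbound (n+1) (by omega)
      refine ⟨0, fun x hx => ?_⟩
      have hx0 : x = 0 := Subsingleton.elim x 0
      simp [hx0]
    · obtain ⟨H₁, hH₁⟩ := IH (n+1) (by omega) (by omega)
      haveI := hfin n
      haveI := hfin (n+1)
      haveI := hfree (n+1)
      set f0 : M.X n →ₗ[Λ] M.X (n+1) := (M.d n (n+1)).hom
      set f1 : M.X (n+1) →ₗ[Λ] M.X (n+2) := (M.d (n+1) (n+2)).hom
      set P : M.X (n+1) →ₗ[Λ] M.X (n+1) := LinearMap.id - H₁ ∘ₗ f1 with hPdef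
      have hPker : ∀ x, f1 (P x) = 0 := by
        intro x
        have h1 : f1 (H₁ (f1 x)) = f1 x := hH₁ (f1 x) (d_d_elem M (n+1) (n+2) (n+3) x)
        simp [hPdef, LinearMap.sub_apply, h1]
      have hPfix : ∀ x, f1 x = 0 → P x = x := by
        intro x hx
        simp [hPdef, LinearMap.sub_apply, hx]
      set K := LinearMap.ker f1 with hK
      haveI : IsNoetherian Λ (M.X (n+1)) :=
        isNoetherian_of_isNoetherianRing_of_finite Λ (M.X (n+1))
      haveI : Module.Finite Λ K := Module.Finite.iff_fg.mpr (IsNoetherian.noetherian K)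
      set Pc : M.X (n+1) →ₗ[Λ] K := LinearMap.codRestrict _ P (fun x => hPker x) with hPc
      set π : M.X n →ₗ[Λ] K :=
        LinearMap.codRestrict _ f0 (fun x => d_d_elem M n (n+1) (n+2) x) with hπ
      have hπsurj : Function.Surjective π := by
        rw [← LinearMap.range_eq_top]
        refine nak_surj (N := ↥K) (LinearMap.range π) (fun z => ?_)
        have hz := hm (n+1) (by omega) (z : M.X (n+1)) (by
          have : f1 (z : M.X (n+1)) = 0 := z.2
          rw [this]; exact zero_mem _)
        obtain ⟨y, hy⟩ := hz
        have key : z - π y = Pc ((z : M.X (n+1)) - f0 y) := by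
          apply Subtype.ext
          have h1 : ((z - π y : K) : M.X (n+1)) = (z : M.X (n+1)) - f0 y := rfl
          have h2 : ((Pc ((z : M.X (n+1)) - f0 y) : K) : M.X (n+1))
              = P ((z : M.X (n+1)) - f0 y) := rfl
          rw [h1, h2, map_sub, hPfix _ z.2, hPfix _ (d_d_elem M n (n+1) (n+2) y)]
        have hmem : Pc ((z : M.X (n+1)) - f0 y) ∈
            ((IsLocalRing.maximalIdeal Λ) • ⊤ : Submodule Λ K) := by
          have h3 : Pc ((z : M.X (n+1)) - f0 y) ∈
              Submodule.map Pc ((IsLocalRing.maximalIdeal Λ) • ⊤ :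
                Submodule Λ (M.X (n+1))) :=
            Submodule.mem_map_of_mem hy
          rw [Submodule.map_smul''] at h3
          exact (smul_mono_right (IsLocalRing.maximalIdeal Λ) (le_top : Submodule.map Pc ⊤ ≤ ⊤)) h3
        have : z = π y + (z - π y) := by abel
        rw [this, key]
        exact Submodule.add_mem_sup (LinearMap.mem_range_self π y) hmem
      haveI : Module.Projective Λ K := by
        refine Module.Projective.of_split K.subtype Pc ?_
        ext z
        exact congrArg Subtype.val (Subtype.ext (hPfix (z : M.X (n+1)) z.2) :
          Pc ((K.subtype : K →ₗ[Λ] M.X (n+1)) z) = z)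
      obtain ⟨σ, hσ⟩ := Module.projective_lifting_property π LinearMap.id hπsurj
      refine ⟨σ ∘ₗ Pc, fun x hx => ?_⟩
      have h1 : M.d n (n+1) (σ (Pc x)) = f0 (σ (Pc x)) := rfl
      have h2 : f0 (σ (Pc x)) = ((π (σ (Pc x)) : K) : M.X (n+1)) := rfl
      have h3 : π (σ (Pc x)) = Pc x := LinearMap.congr_fun hσ (Pc x)
      rw [LinearMap.comp_apply, h1, h2, h3]
      exact hPfix x hx

include hfree hfin hm in
lemma asc_next (n : ℕ) (hnd : n ≠ d) (t : M.X n →ₗ[Λ] M.X (n-1))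
    (ht : (M.d (n-1) n).hom ∘ₗ (t ∘ₗ (M.d (n-1) n).hom) = (M.d (n-1) n).hom) :
    ∃ t' : M.X (n+1) →ₗ[Λ] M.X n,
      t' ∘ₗ (M.d n (n+1)).hom =
        LinearMap.id - (M.d (n-1) n).hom ∘ₗ t := by
  haveI := hfin n
  haveI := hfin (n+1)
  haveI := hfree (n+1)
  haveI : IsNoetherian Λ (M.X n) := isNoetherian_of_isNoetherianRing_of_finite Λ (M.X n)
  set f' : M.X (n-1) →ₗ[Λ] M.X n := (M.d (n-1) n).hom
  set f : M.X n →ₗ[Λ] M.X (n+1) := (M.d n (n+1)).hom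
  set e : M.X n →ₗ[Λ] M.X n := f' ∘ₗ t with hedef
  have hee : ∀ x, e (e x) = e x := by
    intro x
    have := LinearMap.congr_fun ht (t x)
    simpa [hedef, LinearMap.comp_apply] using this
  have hef' : ∀ y, e (f' y) = f' y := by
    intro y
    have := LinearMap.congr_fun ht y
    simpa [hedef, LinearMap.comp_apply] using this
  have hfe : ∀ x, f (e x) = 0 := by
    intro x
    simp only [hedef, LinearMap.comp_apply]
    exact d_d_elem M (n-1) n (n+1) (t x)
  set C := LinearMap.ker e with hC
  haveI : Module.Finite Λ C := Module.Finite.iff_fg.mpr (IsNoetherian.noetherian C)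
  set cor : M.X n →ₗ[Λ] C :=
    LinearMap.codRestrict _ (LinearMap.id - e) (fun x => by
      simp only [hC, LinearMap.mem_ker, LinearMap.sub_apply, LinearMap.id_apply, map_sub,
        hee x, sub_self]) with hcor
  set φ : C →ₗ[Λ] M.X (n+1) := f ∘ₗ C.subtype with hφ
  have hminj : ∀ c : C,
      φ c ∈ ((IsLocalRing.maximalIdeal Λ) • ⊤ : Submodule Λ (M.X (n+1))) →
      c ∈ ((IsLocalRing.maximalIdeal Λ) • ⊤ : Submodule Λ C) := by
    intro c hc
    obtain ⟨y, hy⟩ := hm n hnd (c : M.X n) hc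
    have key : c = cor ((c : M.X n) - f' y) := by
      apply Subtype.ext
      have h1 : ((cor ((c : M.X n) - f' y) : C) : M.X n)
          = ((c : M.X n) - f' y) - e ((c : M.X n) - f' y) := rfl
      have h2 : e (c : M.X n) = 0 := c.2
      rw [h1, map_sub, h2, hef' y, zero_sub, sub_neg_eq_add, sub_add_cancel]
    rw [key]
    have h3 : cor ((c : M.X n) - f' y) ∈
        Submodule.map cor ((IsLocalRing.maximalIdeal Λ) • ⊤ : Submodule Λ (M.X n)) :=
      Submodule.mem_map_of_mem hy
    rw [Submodule.map_smul''] at h3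
    exact (smul_mono_right (IsLocalRing.maximalIdeal Λ) (le_top : Submodule.map cor ⊤ ≤ ⊤)) h3
  obtain ⟨ρ, hρ⟩ := split_of_m_inj φ hminj
  refine ⟨C.subtype ∘ₗ ρ, ?_⟩
  ext x
  have hcx : ((cor x : C) : M.X n) = x - e x := rfl
  have h1 : f x = φ (cor x) := by
    show f x = f ((cor x : C) : M.X n)
    rw [hcx, map_sub, hfe x, sub_zero]
  have h2 : ρ (φ (cor x)) = cor x := LinearMap.congr_fun hρ (cor x)
  simp only [LinearMap.comp_apply, h1, h2]
  exact hcx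

include hfree hfin hm in
lemma asc : ∀ n, n ≤ d →
    ∃ t : M.X n →ₗ[Λ] M.X (n-1),
      ((M.d (n-1) n).hom ∘ₗ (t ∘ₗ (M.d (n-1) n).hom) = (M.d (n-1) n).hom) ∧
      (n < d → ∃ t' : M.X (n+1) →ₗ[Λ] M.X n,
        t' ∘ₗ (M.d n (n+1)).hom =
          LinearMap.id - (M.d (n-1) n).hom ∘ₗ t) := by
  intro n
  induction n with
  | zero =>
    intro _
    have h00 : (M.d 0 0).hom = 0 := by rw [M.shape 0 0 (by simp), ModuleCat.hom_zero]
    refine ⟨0, ?_, ?_⟩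
    · show (M.d 0 0).hom ∘ₗ _ = (M.d 0 0).hom
      rw [h00]
      ext x; rfl
    · intro h0d
      exact asc_next M d hfree hfin hm 0 (by omega) 0 (by
        show (M.d 0 0).hom ∘ₗ _ = (M.d 0 0).hom
        rw [h00]; ext x; rfl)
  | succ n IH =>
    intro hnd
    obtain ⟨t, ht1, ht2⟩ := IH (by omega)
    obtain ⟨t', ht'⟩ := ht2 (by omega)
    have hcond1 : (M.d n (n+1)).hom ∘ₗ (t' ∘ₗ (M.d n (n+1)).hom)
        = (M.d n (n+1)).hom := by
      rw [ht']
      ext x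
      simp only [LinearMap.comp_apply, LinearMap.sub_apply, LinearMap.id_apply, map_sub]
      have : M.d n (n+1) ((M.d (n-1) n) (t x)) = 0 := d_d_elem M (n-1) n (n+1) (t x)
      rw [this, sub_zero]
    exact ⟨t', hcond1, fun hlt => asc_next M d hfree hfin hm (n+1) (by omega) t' hcond1⟩

end Ind

end Stmt19

open Stmt19 in
theorem stmt19 (Λ : Type) [CommRing Λ] [IsNoetherianRing Λ] [IsLocalRing Λ]
    (hregloc : ∃ rs : List Λ, RingTheory.Sequence.IsRegular Λ rs ∧
      Ideal.span {r | r ∈ rs} = IsLocalRing.maximalIdeal Λ)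
    (ν d : ℕ) (hd : d ≤ ν)
    (M : CochainComplex (ModuleCat Λ) ℕ)
    (hfree : ∀ i, Module.Free Λ (M.X i))
    (hfin : ∀ i, Module.Finite Λ (M.X i))
    (hbound : ∀ i, ν < i → Subsingleton (M.X i))
    (hconc : ∀ j, j ≠ d → Subsingleton
      ((((tensorRight (ModuleCat.of Λ (Λ ⧸ IsLocalRing.maximalIdeal Λ))).mapHomologicalComplex
          (ComplexShape.up ℕ)).obj M).homology j)) :
    (∀ j, j ≠ d → Subsingleton (M.homology j)) ∧
      Module.Free Λ (M.homology d) ∧ Module.Finite Λ (M.homology d) ∧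
      ∀ I : Ideal Λ,
        (∃ rs : List Λ, RingTheory.Sequence.IsRegular Λ rs ∧
          Ideal.span {r | r ∈ rs} = I) →
        (∀ j, j ≠ d → Subsingleton
          ((((tensorRight (ModuleCat.of Λ (Λ ⧸ I))).mapHomologicalComplex
              (ComplexShape.up ℕ)).obj M).homology j)) ∧
        Nonempty
          (((((tensorRight (ModuleCat.of Λ (Λ ⧸ I))).mapHomologicalComplex
              (ComplexShape.up ℕ)).obj M).homology d) ≃ₗ[Λ]
            ((M.homology d) ⊗[Λ] (Λ ⧸ I))) := by
  classical
  -- Step 1: translate the hypothesis on the special fibre into an `𝔪`-adic statement.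
  have hm : ∀ j, j ≠ d → ∀ x : M.X j,
      M.d j (j+1) x ∈ ((IsLocalRing.maximalIdeal Λ) • ⊤ : Submodule Λ (M.X (j+1))) →
      ∃ y : M.X (j-1), x - M.d (j-1) j y ∈
        ((IsLocalRing.maximalIdeal Λ) • ⊤ : Submodule Λ (M.X j)) := by
    intro j hj x hx
    set Ck := (((tensorRight (ModuleCat.of Λ (Λ ⧸ IsLocalRing.maximalIdeal Λ))).mapHomologicalComplex
        (ComplexShape.up ℕ)).obj M) with hCk
    have hex := (exactAt_iff_elem Ck j).mp ((subsingleton_homology_iff Ck j).mp (hconc j hj))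
    have h1 : ((M.d j (j+1)).hom.rTensor (Λ ⧸ IsLocalRing.maximalIdeal Λ))
        (x ⊗ₜ (1 : Λ ⧸ IsLocalRing.maximalIdeal Λ)) = 0 := by
      rw [LinearMap.rTensor_tmul]
      exact (tmul_one_eq_zero_iff _ _).mpr hx
    obtain ⟨η, hη⟩ := hex (x ⊗ₜ (1 : Λ ⧸ IsLocalRing.maximalIdeal Λ)) h1
    obtain ⟨y, hy⟩ := tmul_one_surjective (IsLocalRing.maximalIdeal Λ) η
    refine ⟨y, (tmul_one_eq_zero_iff _ _).mp ?_⟩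
    rw [sub_tmul]
    have h2 : (M.d (j-1) j y) ⊗ₜ[Λ] (1 : Λ ⧸ IsLocalRing.maximalIdeal Λ) =
        x ⊗ₜ[Λ] (1 : Λ ⧸ IsLocalRing.maximalIdeal Λ) := by
      rw [← hy] at hη
      have h3 : ((M.d (j-1) j).hom.rTensor (Λ ⧸ IsLocalRing.maximalIdeal Λ))
          (y ⊗ₜ (1 : Λ ⧸ IsLocalRing.maximalIdeal Λ)) =
          (M.d (j-1) j y) ⊗ₜ (1 : Λ ⧸ IsLocalRing.maximalIdeal Λ) := rfl
      rw [← h3]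
      exact hη
    rw [h2, sub_self]
  -- Step 2: boundary homotopy data at degree `d`
  obtain ⟨tbd, htbd1, -⟩ := asc M d hfree hfin hm d le_rfl
  have htbd : ∀ x, M.d (d-1) d (tbd (M.d (d-1) d x)) = M.d (d-1) d x := by
    intro x
    have := LinearMap.congr_fun htbd1 x
    simpa [LinearMap.comp_apply] using this
  obtain ⟨hbd, hhbd0⟩ := desc M ν d hfree hfin hbound hm ν d (by omega) le_rfl
  have hhbd : ∀ x, M.d d (d+1) (hbd (M.d d (d+1) x)) = M.d d (d+1) x :=
    fun x => hhbd0 _ (d_d_elem M d (d+1) (d+2) x)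
  -- Step 3: homotopy data away from degree `d`
  have stru : ∀ j, j ≠ d → ∃ (s : M.X j →ₗ[Λ] M.X (j-1)) (t : M.X (j+1) →ₗ[Λ] M.X j),
      (M.d (j-1) j).hom ∘ₗ s +
        t ∘ₗ (M.d j (j+1)).hom = LinearMap.id := by
    intro j hj
    rcases lt_or_gt_of_ne hj with hlt | hgt
    · obtain ⟨t0, ht1, ht2⟩ := asc M d hfree hfin hm j (le_of_lt hlt)
      obtain ⟨t', ht'⟩ := ht2 hlt
      refine ⟨t0, t', ?_⟩
      rw [ht']
      abel
    · obtain ⟨m, rfl⟩ : ∃ m, j = m + 1 := ⟨j - 1, by omega⟩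
      obtain ⟨Hm, hHm⟩ := desc M ν d hfree hfin hbound hm ν m (by omega) (by omega)
      obtain ⟨Hm1, hHm1⟩ := desc M ν d hfree hfin hbound hm ν (m+1) (by omega) (by omega)
      refine ⟨Hm ∘ₗ (LinearMap.id -
        Hm1 ∘ₗ (M.d (m+1) (m+2)).hom), Hm1, ?_⟩
      ext x
      have hker : M.d (m+1) (m+2) (x - Hm1 (M.d (m+1) (m+2) x)) = 0 := by
        rw [map_sub, hHm1 _ (d_d_elem M (m+1) (m+2) (m+3) x), sub_self]
      have hmain := hHm _ hker
      simp only [LinearMap.add_apply, LinearMap.comp_apply, LinearMap.sub_apply,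
        LinearMap.id_apply]
      show M.d m (m+1) (Hm (x - Hm1 (M.d (m+1) (m+2) x))) + Hm1 (M.d (m+1) (m+2) x) = x
      rw [hmain]
      abel
  -- Step 4: conclusions for `M` itself
  have conc1 : ∀ j, j ≠ d → Subsingleton (M.homology j) := by
    intro j hj
    obtain ⟨s, t, hst⟩ := stru j hj
    exact (subsingleton_homology_iff M j).mpr ((exactAt_iff_elem M j).mpr
      (fun x hx => exact_of_homotopy _ _ _ _ hst x hx))
  -- the idempotent at degree `d`
  set a : M.X (d-1) →ₗ[Λ] M.X d := (M.d (d-1) d).hom with hadef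
  set b : M.X d →ₗ[Λ] M.X (d+1) := (M.d d (d+1)).hom with hbdef
  set w := wmap a b tbd hbd with hwdef
  have hba : ∀ x, b (a x) = 0 := fun x => d_d_elem M (d-1) d (d+1) x
  have hwid : ∀ x, w (w x) = w x := wmap_idem hba htbd hhbd
  obtain ⟨EM⟩ := homology_equiv_range M d tbd hbd htbd hhbd
  haveI := hfin d
  haveI := hfree d
  haveI : IsNoetherian Λ (M.X d) := isNoetherian_of_isNoetherianRing_of_finite Λ (M.X d)
  haveI finw : Module.Finite Λ ↥(LinearMap.range w) :=
    Module.Finite.iff_fg.mpr (IsNoetherian.noetherian _)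
  haveI projw : Module.Projective Λ ↥(LinearMap.range w) := by
    refine Module.Projective.of_split (LinearMap.range w).subtype
      (LinearMap.codRestrict _ w (fun x => LinearMap.mem_range_self _ _)) ?_
    ext ⟨z, y, rfl⟩
    exact congrArg Subtype.val (Subtype.ext (hwid y) :
      LinearMap.codRestrict _ w (fun x => LinearMap.mem_range_self _ _)
        (((LinearMap.range w).subtype : ↥(LinearMap.range w) →ₗ[Λ] M.X d) ⟨w y, _, rfl⟩)
        = ⟨w y, _, rfl⟩)
  haveI : Module.FinitePresentation Λ ↥(LinearMap.range w) :=
    Module.finitePresentation_of_finite Λ _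
  haveI freew : Module.Free Λ ↥(LinearMap.range w) := Module.free_of_flat_of_isLocalRing
  have concFree : Module.Free Λ (M.homology d) := Module.Free.of_equiv EM.symm
  have concFin : Module.Finite Λ (M.homology d) := Module.Finite.equiv EM.symm
  refine ⟨conc1, concFree, concFin, ?_⟩
  -- Step 5: conclusions after base change to `Λ ⧸ I`
  intro I _
  constructor
  · intro j hj
    obtain ⟨s, t, hst⟩ := stru j hj
    have hstT : ((M.d (j-1) j).hom.rTensor (Λ ⧸ I)) ∘ₗ
          (s.rTensor (Λ ⧸ I)) +
        (t.rTensor (Λ ⧸ I)) ∘ₗ ((M.d j (j+1)).hom.rTensor (Λ ⧸ I)) =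
          LinearMap.id := by
      rw [← LinearMap.rTensor_comp, ← LinearMap.rTensor_comp, ← LinearMap.rTensor_add, hst,
        LinearMap.rTensor_id]
    set CI := (((tensorRight (ModuleCat.of Λ (Λ ⧸ I))).mapHomologicalComplex
        (ComplexShape.up ℕ)).obj M) with hCI
    exact (subsingleton_homology_iff CI j).mpr ((exactAt_iff_elem CI j).mpr
      (fun x hx => exact_of_homotopy _ _ _ _ hstT x hx))
  · set CI := (((tensorRight (ModuleCat.of Λ (Λ ⧸ I))).mapHomologicalComplex
        (ComplexShape.up ℕ)).obj M) with hCI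
    have htT : ∀ x, CI.d (d-1) d ((tbd.rTensor (Λ ⧸ I)) (CI.d (d-1) d x)) =
        CI.d (d-1) d x := by
      have hcomp : (a.rTensor (Λ ⧸ I)) ∘ₗ ((tbd.rTensor (Λ ⧸ I)) ∘ₗ (a.rTensor (Λ ⧸ I)))
          = a.rTensor (Λ ⧸ I) := by
        rw [← LinearMap.rTensor_comp, ← LinearMap.rTensor_comp, htbd1]
      intro x
      exact LinearMap.congr_fun hcomp x
    have hhT : ∀ x, CI.d d (d+1) ((hbd.rTensor (Λ ⧸ I)) (CI.d d (d+1) x)) =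
        CI.d d (d+1) x := by
      have hhbd1 : b ∘ₗ (hbd ∘ₗ b) = b := by ext x; exact hhbd x
      have hcomp : (b.rTensor (Λ ⧸ I)) ∘ₗ ((hbd.rTensor (Λ ⧸ I)) ∘ₗ (b.rTensor (Λ ⧸ I)))
          = b.rTensor (Λ ⧸ I) := by
        rw [← LinearMap.rTensor_comp, ← LinearMap.rTensor_comp, hhbd1]
      intro x
      exact LinearMap.congr_fun hcomp x
    obtain ⟨ET⟩ := homology_equiv_range CI d (tbd.rTensor (Λ ⧸ I)) (hbd.rTensor (Λ ⧸ I))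
      htT hhT
    have hwT : wmap (CI.d (d-1) d).hom
        (CI.d d (d+1)).hom
        (tbd.rTensor (Λ ⧸ I)) (hbd.rTensor (Λ ⧸ I)) = w.rTensor (Λ ⧸ I) := by
      show wmap (a.rTensor (Λ ⧸ I)) (b.rTensor (Λ ⧸ I))
        (tbd.rTensor (Λ ⧸ I)) (hbd.rTensor (Λ ⧸ I)) = w.rTensor (Λ ⧸ I)
      rw [hwdef]
      simp only [wmap, LinearMap.rTensor_comp, LinearMap.rTensor_sub, LinearMap.rTensor_id]
    obtain ⟨ERT⟩ := range_rTensor_equiv (Λ ⧸ I) w hwid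
    have hrangeeq : LinearMap.range (wmap (CI.d (d-1) d).hom
        (CI.d d (d+1)).hom
        (tbd.rTensor (Λ ⧸ I)) (hbd.rTensor (Λ ⧸ I)))
        = LinearMap.range (w.rTensor (Λ ⧸ I)) := by rw [hwT]; rfl
    have E3 := LinearEquiv.ofEq _ _ hrangeeq
    exact ⟨ET.trans (hrangeeq ▸ (ERT.trans
      (TensorProduct.congr EM.symm (LinearEquiv.refl Λ (Λ ⧸ I)))))⟩
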